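/- Let {F_1,...,F_k} be a set of k mutually orthogonal frequency squares of type (n;n/m) with symbol set {0,...,m-1}. For r,c ∈ {0,...,n-1}, s ∈ {0,...,m-1}, 1 ≤ t ≤ k, define n×n 0-1 matrices: R_r is the indicator of row r (entry (i,j) equals 1 iff i=r), C_c the indicator of column c, and S_{s,t} the indicator of positions where F_t equals s. Then the set {J_n} ∪ {R_r : 1 ≤ r ≤ n-1} ∪ {C_c : 1 ≤ c ≤ n-1} ∪ {S_{s,t} : 1 ≤ s ≤ m-1, 1 ≤ t ≤ k} is linearly independent in the real vector space of n×n matrices, where J_n is the all-ones matrix. -/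

import Mathlib

/-- `F` is a frequency square of type `(n;lam)` on `m` symbols. -/
def IsFreqSquare {n m : ℕ} (lam : ℕ) (F : Fin n → Fin n → Fin m) : Prop :=
  (∀ i : Fin n, ∀ s : Fin m, (Finset.univ.filter fun j => F i j = s).card = lam) ∧
  (∀ j : Fin n, ∀ s : Fin m, (Finset.univ.filter fun i => F i j = s).card = lam)

/-- Orthogonality of two frequency squares. -/
def AreOrth {n m : ℕ} (lam : ℕ) (F G : Fin n → Fin n → Fin m) : Prop :=
  ∀ a b : Fin m,
    (Finset.univ.filter fun p : Fin n × Fin n => F p.1 p.2 = a ∧ G p.1 p.2 = b).card = lam ^ 2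

/-- Index type for the family: `J`, the rows `R_r` (`r ≠ 0`), the columns `C_c`
(`c ≠ 0`) and the symbol indicators `S_{s,t}` (`s ≠ 0`, `1 ≤ t ≤ k`). -/
abbrev LinIdx (n m k : ℕ) :=
  Unit ⊕ {r : Fin n // r.1 ≠ 0} ⊕ {c : Fin n // c.1 ≠ 0} ⊕ ({s : Fin m // s.1 ≠ 0} × Fin k)

/-- The family of `n × n` real matrices from Theorem `t:linindep`. -/
def linFam {n m k : ℕ} (F : Fin k → Fin n → Fin n → Fin m) :
    LinIdx n m k → Matrix (Fin n) (Fin n) ℝ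
  | Sum.inl _ => fun _ _ => 1
  | Sum.inr (Sum.inl r) => fun i _ => if i = r.1 then 1 else 0
  | Sum.inr (Sum.inr (Sum.inl c)) => fun _ j => if j = c.1 then 1 else 0
  | Sum.inr (Sum.inr (Sum.inr st)) => fun i j => if F st.2 i j = st.1.1 then 1 else 0

private lemma aux_sum {N : ℕ} (f : Fin N → ℝ) (h0 : ∀ r : Fin N, r.1 = 0 → f r = 0) (x : Fin N) :
    ∑ r : {r : Fin N // r.1 ≠ 0}, f r.1 * (if x = r.1 then 1 else 0) = f x := by
  classical
  rw [← Finset.sum_subtype (Finset.univ.filter fun r : Fin N => r.1 ≠ 0) (by simp)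
      (fun r => f r * (if x = r then 1 else 0))]
  have := Finset.sum_filter_of_ne (s := (Finset.univ : Finset (Fin N)))
    (p := fun r : Fin N => r.1 ≠ 0) (f := fun r => f r * (if x = r then 1 else 0))
    (fun r _ hr hr0 => hr (by show f r * (if x = r then 1 else 0) = 0; rw [h0 r hr0, zero_mul]))
  rw [this]
  simp [mul_ite, Finset.sum_ite_eq]

private lemma sum_comp_eq {N M : ℕ} (lam : ℕ) (G : Fin N → Fin M)
    (h : ∀ s : Fin M, (Finset.univ.filter fun j => G j = s).card = lam) (f : Fin M → ℝ) :
    ∑ j, f (G j) = lam * ∑ s, f s := by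
  classical
  rw [← Finset.sum_fiberwise Finset.univ G (fun j => f (G j)), Finset.mul_sum]
  refine Finset.sum_congr rfl fun s _ => ?_
  rw [Finset.sum_congr rfl (fun j hj => by rw [(Finset.mem_filter.1 hj).2]), Finset.sum_const, h s]
  simp [mul_comm]


theorem stmt1 (n m k : ℕ) (hn : 0 < n) (hm : 2 ≤ m) (hmn : m ∣ n)
    (F : Fin k → Fin n → Fin n → Fin m)
    (hF : ∀ t, IsFreqSquare (n / m) (F t))
    (horth : ∀ s t, s ≠ t → AreOrth (n / m) (F s) (F t)) :
    LinearIndependent ℝ (linFam F) := by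
  classical
  have hmpos : 0 < m := by omega
  set lam := n / m with hlamdef
  have hlam : 0 < lam := Nat.div_pos (Nat.le_of_dvd hn hmn) hmpos
  rw [Fintype.linearIndependent_iff]
  intro g hg
  set a := g (Sum.inl ()) with ha_def
  set b : Fin n → ℝ := fun i => if h : i.1 ≠ 0 then g (Sum.inr (Sum.inl ⟨i, h⟩)) else 0 with hb_def
  set c : Fin n → ℝ := fun j => if h : j.1 ≠ 0 then g (Sum.inr (Sum.inr (Sum.inl ⟨j, h⟩))) else 0 with hc_def
  set d : Fin k → Fin m → ℝ :=
    fun t s => if h : s.1 ≠ 0 then g (Sum.inr (Sum.inr (Sum.inr (⟨s, h⟩, t)))) else 0 with hd_def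
  have E : ∀ i j : Fin n, a + b i + c j + ∑ t, d t (F t i j) = 0 := by
    intro i j
    have h := congrFun (congrFun hg i) j
    simp only [Fintype.sum_sum_type, Fintype.sum_prod_type, Matrix.add_apply, Matrix.sum_apply,
      Matrix.smul_apply, smul_eq_mul, linFam, Matrix.zero_apply, mul_one,
      Fintype.sum_unique] at h
    have h1 : (∑ x : {r : Fin n // r.1 ≠ 0}, g (Sum.inr (Sum.inl x)) * (if i = x.1 then 1 else 0))
        = b i := by
      rw [← aux_sum b (fun r hr => by simp [hb_def, hr]) i]
      exact Finset.sum_congr rfl fun r _ => by simp [hb_def, r.2]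
    have h2 : (∑ x : {c : Fin n // c.1 ≠ 0}, g (Sum.inr (Sum.inr (Sum.inl x))) * (if j = x.1 then 1 else 0))
        = c j := by
      rw [← aux_sum c (fun r hr => by simp [hc_def, hr]) j]
      exact Finset.sum_congr rfl fun r _ => by simp [hc_def, r.2]
    have h3 : (∑ x : {s : Fin m // s.1 ≠ 0}, ∑ t : Fin k,
          g (Sum.inr (Sum.inr (Sum.inr (x, t)))) * (if F t i j = x.1 then 1 else 0))
        = ∑ t, d t (F t i j) := by
      rw [Finset.sum_comm]
      refine Finset.sum_congr rfl fun t _ => ?_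
      rw [← aux_sum (d t) (fun s hs => by simp [hd_def, hs]) (F t i j)]
      exact Finset.sum_congr rfl fun s _ => by simp [hd_def, s.2]
    rw [h1, h2, h3] at h
    rw [← ha_def] at h
    linarith [h]
  have hrowsum : ∀ (t : Fin k) (i : Fin n), ∑ j, d t (F t i j) = lam * ∑ s, d t s :=
    fun t i => sum_comp_eq lam (F t i) (fun s => (hF t).1 i s) (d t)
  have hcolsum : ∀ (t : Fin k) (j : Fin n), ∑ i, d t (F t i j) = lam * ∑ s, d t s :=
    fun t j => sum_comp_eq lam (fun i => F t i j) (fun s => (hF t).2 j s) (d t)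
  have Erow : ∀ i : Fin n, (n:ℝ) * a + n * b i + (∑ j, c j) + lam * ∑ t, ∑ s, d t s = 0 := by
    intro i
    have h : ∑ j : Fin n, (a + b i + c j + ∑ t, d t (F t i j)) = 0 :=
      Finset.sum_eq_zero fun j _ => E i j
    simp only [Finset.sum_add_distrib, Finset.sum_const, Finset.card_univ, Fintype.card_fin,
      nsmul_eq_mul] at h
    rw [Finset.sum_comm] at h
    simp only [hrowsum] at h
    rw [← Finset.mul_sum] at h
    linarith [h]
  have Ecol : ∀ j : Fin n, (n:ℝ) * a + (∑ i, b i) + n * c j + lam * ∑ t, ∑ s, d t s = 0 := by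
    intro j
    have h : ∑ i : Fin n, (a + b i + c j + ∑ t, d t (F t i j)) = 0 :=
      Finset.sum_eq_zero fun i _ => E i j
    simp only [Finset.sum_add_distrib, Finset.sum_const, Finset.card_univ, Fintype.card_fin,
      nsmul_eq_mul] at h
    rw [Finset.sum_comm] at h
    simp only [hcolsum] at h
    rw [← Finset.mul_sum] at h
    linarith [h]
  have hb0 : b ⟨0, hn⟩ = 0 := by simp [hb_def]
  have hc0 : c ⟨0, hn⟩ = 0 := by simp [hc_def]
  have hnne : ((n:ℝ)) ≠ 0 := Nat.cast_ne_zero.2 hn.ne'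
  have hb : ∀ i, b i = 0 := by
    intro i
    have h1 := Erow i
    have h2 := Erow ⟨0, hn⟩
    rw [hb0, mul_zero] at h2
    have : (n:ℝ) * b i = 0 := by linarith
    exact (mul_eq_zero.1 this).resolve_left hnne
  have hc : ∀ j, c j = 0 := by
    intro j
    have h1 := Ecol j
    have h2 := Ecol ⟨0, hn⟩
    rw [hc0, mul_zero] at h2
    have : (n:ℝ) * c j = 0 := by linarith
    exact (mul_eq_zero.1 this).resolve_left hnne
  have E2 : ∀ i j : Fin n, a + ∑ t, d t (F t i j) = 0 := by
    intro i j
    have := E i j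
    rw [hb i, hc j] at this
    linarith
  have hN : ∀ (t : Fin k) (s : Fin m),
      (Finset.univ.filter fun p : Fin n × Fin n => F t p.1 p.2 = s).card = n * lam := by
    intro t s
    rw [Finset.card_filter, Fintype.sum_prod_type]
    have : ∀ i : Fin n, (∑ j : Fin n, if F t i j = s then 1 else 0) = lam := by
      intro i
      rw [← Finset.card_filter]
      exact (hF t).1 i s
    simp [this]
  have Ets : ∀ (t : Fin k) (s : Fin m),
      ((n * lam : ℕ) : ℝ) * a + ((n * lam : ℕ) : ℝ) * d t s
        + (lam^2 : ℕ) * ∑ t' ∈ Finset.univ.erase t, (∑ s', d t' s') = 0 := by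
    intro t s
    set filt := Finset.univ.filter fun p : Fin n × Fin n => F t p.1 p.2 = s with hfilt
    have h0 : ∑ p ∈ filt, (a + ∑ t', d t' (F t' p.1 p.2)) = 0 :=
      Finset.sum_eq_zero fun p _ => E2 p.1 p.2
    rw [Finset.sum_add_distrib, Finset.sum_const, hN t s, nsmul_eq_mul, Finset.sum_comm] at h0
    have htt : ∑ p ∈ filt, d t (F t p.1 p.2) = ((n * lam : ℕ) : ℝ) * d t s := by
      rw [Finset.sum_congr rfl fun p hp => by rw [(Finset.mem_filter.1 hp).2],
        Finset.sum_const, hN t s, nsmul_eq_mul]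
    have hterm : ∀ t' : Fin k, t' ≠ t →
        ∑ p ∈ filt, d t' (F t' p.1 p.2) = ((lam^2 : ℕ) : ℝ) * ∑ s', d t' s' := by
      intro t' ht'
      rw [← Finset.sum_fiberwise filt (fun p => F t' p.1 p.2) (fun p => d t' (F t' p.1 p.2)),
        Finset.mul_sum]
      refine Finset.sum_congr rfl fun s' _ => ?_
      rw [Finset.sum_congr rfl (fun p hp => by rw [(Finset.mem_filter.1 hp).2]),
        Finset.sum_const]
      rw [hfilt, Finset.filter_filter]
      rw [horth t t' (Ne.symm ht') s s']
      simp [mul_comm]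
    rw [← Finset.add_sum_erase _ _ (Finset.mem_univ t), htt] at h0
    rw [Finset.sum_congr rfl (fun t' ht' => hterm t' (Finset.ne_of_mem_erase ht')),
      ← Finset.mul_sum] at h0
    linarith [h0]
  have hd : ∀ t s, d t s = 0 := by
    intro t s
    have h1 := Ets t s
    have h2 := Ets t ⟨0, hmpos⟩
    have hz : d t ⟨0, hmpos⟩ = 0 := by simp [hd_def]
    rw [hz, mul_zero] at h2
    have hnl : (0:ℝ) < ((n * lam : ℕ) : ℝ) := by
      have : 0 < n * lam := Nat.mul_pos hn hlam
      exact_mod_cast this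
    have : ((n * lam : ℕ) : ℝ) * d t s = 0 := by linarith
    exact (mul_eq_zero.1 this).resolve_left (ne_of_gt hnl)
  have haz : a = 0 := by
    have := E2 ⟨0, hn⟩ ⟨0, hn⟩
    simp only [hd, Finset.sum_const_zero, add_zero] at this
    exact this
  intro idx
  rcases idx with u | r | cc | ⟨s, t⟩
  · cases u
    rw [← ha_def]
    exact haz
  · simpa [hb_def, r.2] using hb r.1
  · simpa [hc_def, cc.2] using hc cc.1
  · simpa [hd_def, s.2] using hd t s.1
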